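/- Let E be a field of characteristic ≠ 2 and q an anisotropic quadratic form of rank r over E with u(E) < 2r. Then for every α ∈ E*, there exist anisotropic vectors x, y with α ≡ q(x)·q(y) modulo squares, i.e., α is a spinor norm. (Key step: q ⊥ (−α·q) is isotropic, giving q(x) = α·q(y) with q(y) ≠ 0.) -/

import Mathlib

/-- **Anisotropic case of the surjectivity of the spinor norm.**
Let `E` be a field of characteristic `≠ 2` and `q` an anisotropic quadratic form of
rank `r` over `E` with `u(E) < 2r`.  Then for every `α ∈ E*` there exist anisotropic
vectors `x`, `y` with `α ≡ q(x) · q(y)` modulo squares, i.e. `α` is a spinor norm of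
`q`.  (Key step: `q ⊥ (−α·q)` is isotropic, giving `q(x) = α · q(y)` with
`q(y) ≠ 0`.) -/
theorem spinor_norm_of_anisotropic_u_invariant_lt
    (E : Type*) [Field E] (hchar : (2 : E) ≠ 0)
    (V : Type*) [AddCommGroup V] [Module E V] [FiniteDimensional E V]
    (q : QuadraticForm E V)
    (hani : q.Anisotropic)
    (hu : ∀ (n : ℕ) (φ : QuadraticForm E (Fin n → E)),
      φ.Anisotropic → n < 2 * Module.finrank E V) :
    ∀ α : E, α ≠ 0 →
      ∃ x y : V, q x ≠ 0 ∧ q y ≠ 0 ∧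
        ∃ c : E, c ≠ 0 ∧ α = q x * q y * c ^ 2 := by
  intro α hα
  -- The form Q = q ⊥ (−α·q) on V × V
  set Q : QuadraticForm E (V × V) := q.prod ((-α) • q) with hQ
  -- Q is isotropic
  have hiso : ¬ Q.Anisotropic := by
    intro haniQ
    have hd : Module.finrank E (V × V) = 2 * Module.finrank E V := by
      rw [Module.finrank_prod]; ring
    let e : (Fin (Module.finrank E (V × V)) → E) ≃ₗ[E] (V × V) :=
      (Module.finBasis E (V × V)).equivFun.symm
    have : (Q.comp (e : (Fin (Module.finrank E (V × V)) → E) →ₗ[E] (V × V))).Anisotropic := by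
      intro v hv
      have := haniQ (e v) (by simpa using hv)
      exact e.injective (by simpa using this)
    have := hu _ _ this
    omega
  rw [QuadraticMap.Anisotropic] at hiso
  push_neg at hiso
  obtain ⟨⟨x, y⟩, hQ0, hxy⟩ := hiso
  have hprod : q x + (-α) * q y = 0 := by
    simpa [hQ, QuadraticMap.prod_apply] using hQ0
  have hy : y ≠ 0 := by
    intro h
    apply hxy
    subst h
    have : q x = 0 := by simpa using hprod
    have := hani x this
    simp [this]
  have hqy : q y ≠ 0 := fun h => hy (hani y h)
  have hx : x ≠ 0 := by
    intro h
    subst h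
    have : (-α) * q y = 0 := by simpa using hprod
    rcases mul_eq_zero.mp this with h | h
    · exact hα (by simpa using neg_eq_zero.mp h)
    · exact hqy h
  have hqx : q x ≠ 0 := fun h => hx (hani x h)
  refine ⟨x, y, hqx, hqy, (q y)⁻¹, inv_ne_zero hqy, ?_⟩
  have hqxval : q x = α * q y := by linear_combination hprod
  field_simp [hqxval]
  linear_combination -hqxval
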